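/- If a collection of affine subspaces {A_ℓ}_{ℓ=1}^n of R^D is affinely independent (dim(aff(∪_ℓ A_ℓ)) = Σ_ℓ dim(A_ℓ) + (n−1)), then for any two nonempty disjoint index sets I, I' ⊆ {1,...,n}, the affine subspaces aff(∪_{κ∈I} A_κ) and aff(∪_{κ'∈I'} A_{κ'}) are affinely disjoint. -/

import Mathlib

open Module

section Aux

variable {V : Type*} [AddCommGroup V] [Module ℝ V] [FiniteDimensional ℝ V]

lemma aux_span_singleton_le (v : V) : finrank ℝ (ℝ ∙ v) ≤ 1 := by
  rcases eq_or_ne v 0 with h | h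
  · rw [h, Submodule.span_zero_singleton]
    simp
  · rw [finrank_span_singleton h]

lemma aux_sup2 (B C : AffineSubspace ℝ V) (hB : (B : Set V).Nonempty)
    (hC : (C : Set V).Nonempty) :
    finrank ℝ (B ⊔ C).direction ≤ finrank ℝ B.direction + finrank ℝ C.direction + 1 := by
  obtain ⟨p1, hp1⟩ := hB
  obtain ⟨p2, hp2⟩ := hC
  rw [AffineSubspace.direction_sup hp1 hp2]
  calc finrank ℝ ↑(B.direction ⊔ C.direction ⊔ ℝ ∙ (p2 -ᵥ p1))
      ≤ finrank ℝ ↑(B.direction ⊔ C.direction) + finrank ℝ (ℝ ∙ (p2 -ᵥ p1)) :=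
        Submodule.finrank_add_le_finrank_add_finrank _ _
    _ ≤ (finrank ℝ B.direction + finrank ℝ C.direction) + 1 :=
        add_le_add (Submodule.finrank_add_le_finrank_add_finrank _ _)
          (aux_span_singleton_le _)

lemma aux_pair (B C : AffineSubspace ℝ V) (hB : (B : Set V).Nonempty)
    (hC : (C : Set V).Nonempty)
    (h : finrank ℝ (B ⊔ C).direction = finrank ℝ B.direction + finrank ℝ C.direction + 1) :
    ((B : Set V) ∩ (C : Set V) = ∅) ∧ B.direction ⊓ C.direction = ⊥ := by
  obtain ⟨p1, hp1⟩ := hB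
  obtain ⟨p2, hp2⟩ := hC
  rw [AffineSubspace.direction_sup hp1 hp2] at h
  set X := B.direction ⊔ C.direction with hX
  have h1 : finrank ℝ ↑(X ⊔ ℝ ∙ (p2 -ᵥ p1)) ≤ finrank ℝ X + 1 :=
    le_trans (Submodule.finrank_add_le_finrank_add_finrank _ _)
      (Nat.add_le_add_left (aux_span_singleton_le _) _)
  have h2 : finrank ℝ X ≤ finrank ℝ B.direction + finrank ℝ C.direction :=
    Submodule.finrank_add_le_finrank_add_finrank _ _
  have hXeq : finrank ℝ X = finrank ℝ B.direction + finrank ℝ C.direction := by omega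
  have hv : (p2 -ᵥ p1 : V) ∉ X := by
    intro hmem
    have : X ⊔ (ℝ ∙ (p2 -ᵥ p1)) = X := by
      rw [sup_eq_left, Submodule.span_singleton_le_iff_mem]; exact hmem
    rw [this] at h
    omega
  constructor
  · rw [Set.eq_empty_iff_forall_notMem]
    rintro x ⟨hxB, hxC⟩
    apply hv
    have : (p2 -ᵥ p1 : V) = (p2 -ᵥ x) + (x -ᵥ p1) := (vsub_add_vsub_cancel p2 x p1).symm
    rw [this]
    exact Submodule.add_mem _
      (le_sup_right (α := Submodule ℝ V) (AffineSubspace.vsub_mem_direction hp2 hxC))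
      (le_sup_left (α := Submodule ℝ V) (AffineSubspace.vsub_mem_direction hxB hp1))
  · have := Submodule.finrank_sup_add_finrank_inf_eq B.direction C.direction
    rw [← hX, hXeq] at this
    have h0 : finrank ℝ ↑(B.direction ⊓ C.direction) = 0 := by omega
    exact Submodule.finrank_eq_zero.mp h0

variable {ι : Type*} [DecidableEq ι]

lemma aux_sup_nonempty (A : ι → AffineSubspace ℝ V) (hne : ∀ i, (A i : Set V).Nonempty)
    {S : Finset ι} (hS : S.Nonempty) : ((S.sup A : AffineSubspace ℝ V) : Set V).Nonempty := by
  obtain ⟨a, ha⟩ := hS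
  obtain ⟨p, hp⟩ := hne a
  exact ⟨p, (Finset.le_sup ha : A a ≤ S.sup A) hp⟩

lemma aux_many (A : ι → AffineSubspace ℝ V) (hne : ∀ i, (A i : Set V).Nonempty)
    (S : Finset ι) : ∀ B : AffineSubspace ℝ V, (B : Set V).Nonempty →
    finrank ℝ (B ⊔ S.sup A).direction ≤
      finrank ℝ B.direction + ∑ i ∈ S, finrank ℝ (A i).direction + S.card := by
  induction S using Finset.cons_induction with
  | empty => intro B hB; rw [Finset.sup_empty, sup_bot_eq]; simp
  | cons a s ha ih =>
    intro B hB
    have hBa : ((B ⊔ A a : AffineSubspace ℝ V) : Set V).Nonempty := by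
      obtain ⟨p, hp⟩ := hB
      exact ⟨p, (le_sup_left : B ≤ B ⊔ A a) hp⟩
    have key : B ⊔ (Finset.cons a s ha).sup A = (B ⊔ A a) ⊔ s.sup A := by
      rw [Finset.sup_cons, ← sup_assoc]
    rw [key, Finset.sum_cons, Finset.card_cons]
    calc finrank ℝ ((B ⊔ A a) ⊔ s.sup A).direction
        ≤ finrank ℝ (B ⊔ A a).direction + ∑ i ∈ s, finrank ℝ (A i).direction + s.card :=
          ih _ hBa
      _ ≤ (finrank ℝ B.direction + finrank ℝ (A a).direction + 1)
            + ∑ i ∈ s, finrank ℝ (A i).direction + s.card := by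
          have := aux_sup2 B (A a) hB (hne a)
          omega
      _ = finrank ℝ B.direction + (finrank ℝ (A a).direction
            + ∑ i ∈ s, finrank ℝ (A i).direction) + (s.card + 1) := by ring

lemma aux_subadd (A : ι → AffineSubspace ℝ V) (hne : ∀ i, (A i : Set V).Nonempty)
    {S : Finset ι} (hS : S.Nonempty) :
    finrank ℝ (S.sup A).direction ≤
      ∑ i ∈ S, finrank ℝ (A i).direction + (S.card - 1) := by
  obtain ⟨a, ha⟩ := hS
  rw [← Finset.insert_erase ha, Finset.sup_insert,
    Finset.sum_insert (Finset.notMem_erase a S), Finset.card_insert_of_notMem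
    (Finset.notMem_erase a S)]
  have := aux_many A hne (S.erase a) (A a) (hne a)
  omega

lemma aux_span (A : ι → AffineSubspace ℝ V) (S : Finset ι) :
    affineSpan ℝ (⋃ κ ∈ S, (A κ : Set V)) = S.sup A := by
  apply le_antisymm
  · rw [affineSpan_le]
    exact Set.iUnion₂_subset fun κ hκ x hx => (Finset.le_sup hκ : A κ ≤ S.sup A) hx
  · refine Finset.sup_le fun κ hκ => ?_
    conv_lhs => rw [← AffineSubspace.affineSpan_coe (A κ)]
    exact affineSpan_mono ℝ fun x hx => Set.mem_biUnion hκ hx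

end Aux

/-- If a collection of affine subspaces is affinely independent, then the affine spans of
the unions over any two nonempty disjoint index sets are affinely disjoint. -/
theorem stmt5 (D n : ℕ) (A : Fin n → AffineSubspace ℝ (Fin D → ℝ))
    (hne : ∀ ℓ, (A ℓ : Set (Fin D → ℝ)).Nonempty)
    (hind : Module.finrank ℝ (affineSpan ℝ (⋃ ℓ, (A ℓ : Set (Fin D → ℝ)))).direction =
      (∑ ℓ, Module.finrank ℝ (A ℓ).direction) + (n - 1))
    (I I' : Finset (Fin n)) (hI : I.Nonempty) (hI' : I'.Nonempty) (hdisj : Disjoint I I') :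
    ((affineSpan ℝ (⋃ κ ∈ I, (A κ : Set (Fin D → ℝ))) : Set (Fin D → ℝ)) ∩
        (affineSpan ℝ (⋃ κ ∈ I', (A κ : Set (Fin D → ℝ))) : Set (Fin D → ℝ)) = ∅) ∧
      (affineSpan ℝ (⋃ κ ∈ I, (A κ : Set (Fin D → ℝ)))).direction ⊓
        (affineSpan ℝ (⋃ κ ∈ I', (A κ : Set (Fin D → ℝ)))).direction = ⊥ := by
  classical
  rw [aux_span A I, aux_span A I']
  set J : Finset (Fin n) := Finset.univ \ (I ∪ I') with hJ
  have hdisjJ : Disjoint (I ∪ I') J := Finset.disjoint_sdiff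
  have hU : (I ∪ I') ∪ J = Finset.univ := Finset.union_sdiff_of_subset (Finset.subset_univ _)
  -- rewrite the global span
  have htot : affineSpan ℝ (⋃ ℓ, (A ℓ : Set (Fin D → ℝ))) = Finset.univ.sup A := by
    rw [← aux_span A Finset.univ]
    congr 1
    simp
  rw [htot] at hind
  have hsum : ∑ ℓ, finrank ℝ (A ℓ).direction =
      (∑ ℓ ∈ I, finrank ℝ (A ℓ).direction + ∑ ℓ ∈ I', finrank ℝ (A ℓ).direction)
        + ∑ ℓ ∈ J, finrank ℝ (A ℓ).direction := by
    rw [← Finset.sum_union hdisj, ← Finset.sum_union hdisjJ, hU]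
  have hcard : (I.card + I'.card) + J.card = n := by
    rw [← Finset.card_union_of_disjoint hdisj, ← Finset.card_union_of_disjoint hdisjJ, hU,
      Finset.card_univ, Fintype.card_fin]
  have hsupU : Finset.univ.sup A = (I.sup A ⊔ I'.sup A) ⊔ J.sup A := by
    rw [← hU, Finset.sup_union, Finset.sup_union]
  have hneI := aux_sup_nonempty A hne hI
  have hneI' := aux_sup_nonempty A hne hI'
  have hneB : ((I.sup A ⊔ I'.sup A : AffineSubspace ℝ (Fin D → ℝ)) : Set (Fin D → ℝ)).Nonempty := by
    obtain ⟨p, hp⟩ := hneI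
    exact ⟨p, (le_sup_left : I.sup A ≤ _) hp⟩
  have h1 := aux_many A hne J (I.sup A ⊔ I'.sup A) hneB
  have h2 := aux_sup2 (I.sup A) (I'.sup A) hneI hneI'
  have h3 := aux_subadd A hne hI
  have h4 := aux_subadd A hne hI'
  rw [hsupU] at hind
  have hIc : 1 ≤ I.card := Finset.card_pos.mpr hI
  have hI'c : 1 ≤ I'.card := Finset.card_pos.mpr hI'
  have heq : finrank ℝ (I.sup A ⊔ I'.sup A).direction =
      finrank ℝ (I.sup A).direction + finrank ℝ (I'.sup A).direction + 1 := by omega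
  exact aux_pair (I.sup A) (I'.sup A) hneI hneI' heq
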